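/- Let Φ : ℝ → ℝ be continuously differentiable, let u_L < u_R with Φ(u_L) = Φ(u_R) = 0 and Φ(u) > 0 for all u ∈ (u_L, u_R). Then for every u₀ ∈ (u_L, u_R) there exists a differentiable function u : ℝ → ℝ with u(0) = u₀, u′(ζ) = Φ(u(ζ)) for all ζ ∈ ℝ, u(ζ) ∈ (u_L, u_R) for all ζ, lim_{ζ→−∞} u(ζ) = u_L and lim_{ζ→+∞} u(ζ) = u_R. -/

import Mathlib

open Filter

/-- The scalar profile ODE `u̇ = Φ(u)` with exactly the two rest points `u_L` (unstable)
and `u_R` (stable), and `Φ > 0` in between, admits through every intermediate initial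
value a globally defined heteroclinic orbit from `u_L` to `u_R`. -/
theorem heteroclinic_orbit_exists (Φ : ℝ → ℝ) (hΦ : ContDiff ℝ 1 Φ)
    (uL uR : ℝ) (hLR : uL < uR) (hL : Φ uL = 0) (hR : Φ uR = 0)
    (hpos : ∀ u ∈ Set.Ioo uL uR, 0 < Φ u) :
    ∀ u0 ∈ Set.Ioo uL uR, ∃ u : ℝ → ℝ,
      u 0 = u0 ∧
      (∀ ζ : ℝ, HasDerivAt u (Φ (u ζ)) ζ) ∧
      (∀ ζ : ℝ, u ζ ∈ Set.Ioo uL uR) ∧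
      Tendsto u atBot (nhds uL) ∧
      Tendsto u atTop (nhds uR) := by
  intro u0 hu0
  set S : Set ℝ := Set.Ioo uL uR with hS
  have hΦc : Continuous Φ := hΦ.continuous
  set g : ℝ → ℝ := fun w => (Φ w)⁻¹ with hgdef
  have hgc : ContinuousOn g S := hΦc.continuousOn.inv₀ fun w hw => (hpos w hw).ne'
  have hgpos : ∀ w ∈ S, 0 < g w := fun w hw => inv_pos.2 (hpos w hw)
  have hsub : ∀ {v w : ℝ}, v ∈ S → w ∈ S → Set.uIcc v w ⊆ S := fun hv hw =>
    Set.ordConnected_Ioo.uIcc_subset hv hw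
  have hIccsub : ∀ {v w : ℝ}, v ∈ S → w ∈ S → Set.Icc v w ⊆ S := fun hv hw =>
    Set.ordConnected_Ioo.out hv hw
  have hint : ∀ {v w : ℝ}, v ∈ S → w ∈ S → IntervalIntegrable g MeasureTheory.volume v w :=
    fun hv hw => (hgc.mono (hsub hv hw)).intervalIntegrable
  set F : ℝ → ℝ := fun v => ∫ w in u0..v, g w with hFdef
  have hF0 : F u0 = 0 := intervalIntegral.integral_same
  have hFd : ∀ v ∈ S, HasDerivAt F (g v) v := fun v hv =>
    intervalIntegral.integral_hasDerivAt_right (hint hu0 hv)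
      ⟨S, isOpen_Ioo.mem_nhds hv, hgc.aestronglyMeasurable isOpen_Ioo.measurableSet⟩
      (hgc.continuousAt (isOpen_Ioo.mem_nhds hv))
  have hFadd : ∀ {v w : ℝ}, v ∈ S → w ∈ S → F w = F v + ∫ x in v..w, g x := by
    intro v w hv hw
    have h := intervalIntegral.integral_add_adjacent_intervals (hint hu0 hv) (hint hv hw)
    simp only [hFdef]
    linarith [h]
  have hFlt : ∀ {v w : ℝ}, v ∈ S → w ∈ S → v < w → F v < F w := by
    intro v w hv hw hvw
    have hpos' : 0 < ∫ x in v..w, g x :=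
      intervalIntegral.intervalIntegral_pos_of_pos_on (hint hv hw)
        (fun x hx => hgpos x (hIccsub hv hw ⟨hx.1.le, hx.2.le⟩)) hvw
    have := hFadd hv hw
    linarith
  -- Lipschitz-type bound on Φ near the rest points
  obtain ⟨M, hM⟩ := (isCompact_Icc (a := uL) (b := uR)).exists_bound_of_continuousOn
    (hΦ.continuous_deriv le_rfl).continuousOn
  set M' : ℝ := max M 1 with hM'def
  have hM'pos : (0 : ℝ) < M' := lt_of_lt_of_le one_pos (le_max_right _ _)
  have hbound : ∀ w ∈ Set.Icc uL uR, ‖deriv Φ w‖ ≤ M' := fun w hw =>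
    (hM w hw).trans (le_max_left _ _)
  have hdiff : ∀ x ∈ Set.Icc uL uR, DifferentiableAt ℝ Φ x := fun x _ =>
    hΦ.differentiable one_ne_zero x
  have hΦleL : ∀ w ∈ Set.Icc uL uR, Φ w ≤ M' * (w - uL) := by
    intro w hw
    have h := (convex_Icc uL uR).norm_image_sub_le_of_norm_deriv_le hdiff hbound
      (Set.left_mem_Icc.2 hLR.le) hw
    rw [hL, sub_zero, Real.norm_eq_abs, Real.norm_eq_abs,
      abs_of_nonneg (sub_nonneg.2 hw.1)] at h
    exact (le_abs_self _).trans h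
  have hΦleR : ∀ w ∈ Set.Icc uL uR, Φ w ≤ M' * (uR - w) := by
    intro w hw
    have h := (convex_Icc uL uR).norm_image_sub_le_of_norm_deriv_le hdiff hbound
      (Set.right_mem_Icc.2 hLR.le) hw
    rw [hR, sub_zero, Real.norm_eq_abs, Real.norm_eq_abs] at h
    have : |w - uR| = uR - w := by rw [abs_sub_comm, abs_of_nonneg (sub_nonneg.2 hw.2)]
    rw [this] at h
    exact (le_abs_self _).trans h
  -- lower bounds on g
  have hgeL : ∀ w ∈ S, (M' * (w - uL))⁻¹ ≤ g w := by
    intro w hw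
    exact inv_anti₀ (hpos w hw) (hΦleL w ⟨hw.1.le, hw.2.le⟩)
  have hgeR : ∀ w ∈ S, (M' * (uR - w))⁻¹ ≤ g w := by
    intro w hw
    exact inv_anti₀ (hpos w hw) (hΦleR w ⟨hw.1.le, hw.2.le⟩)
  -- F is unbounded below near uL
  have hdown : ∀ z : ℝ, ∃ v ∈ S, F v < z := by
    intro z
    set e : ℝ := min ((u0 - uL) / 2) (Real.exp (Real.log (u0 - uL) + M' * (z - 1))) with hedef
    have hd0 : 0 < u0 - uL := sub_pos.2 hu0.1
    have he0 : 0 < e := lt_min (by linarith) (Real.exp_pos _)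
    set v : ℝ := uL + e with hvdef
    have hv1 : uL < v := by simp [hvdef]; linarith
    have hv2 : v < u0 := by
      have : e ≤ (u0 - uL) / 2 := min_le_left _ _
      simp only [hvdef]; linarith
    have hvS : v ∈ S := ⟨hv1, hv2.trans hu0.2⟩
    refine ⟨v, hvS, ?_⟩
    -- F v = - ∫ v..u0 g
    have hsymm : F v = -∫ x in v..u0, g x := by
      simp only [hFdef]
      rw [intervalIntegral.integral_symm]
    -- lower bound the integral ∫ v..u0, g by ∫ v..u0 (M'(x-uL))⁻¹
    have hcont2 : ContinuousOn (fun x : ℝ => (M' * (x - uL))⁻¹) (Set.Icc v u0) := by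
      apply ContinuousOn.inv₀
      · fun_prop
      · intro x hx
        have : 0 < x - uL := by have := hx.1; linarith
        positivity
    have hint2 : IntervalIntegrable (fun x : ℝ => (M' * (x - uL))⁻¹)
        MeasureTheory.volume v u0 := by
      apply ContinuousOn.intervalIntegrable
      rwa [Set.uIcc_of_le hv2.le]
    have hmono : (∫ x in v..u0, (M' * (x - uL))⁻¹) ≤ ∫ x in v..u0, g x := by
      apply intervalIntegral.integral_mono_on hv2.le hint2 (hint hvS hu0)
      intro x hx
      exact hgeL x ⟨lt_of_lt_of_le hv1 hx.1, lt_of_le_of_lt hx.2 hu0.2⟩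
    -- compute the comparison integral
    have hcomp : (∫ x in v..u0, (M' * (x - uL))⁻¹)
        = M'⁻¹ * (Real.log (u0 - uL) - Real.log (v - uL)) := by
      have h1 : (∫ x in v..u0, (M' * (x - uL))⁻¹)
          = M'⁻¹ * ∫ x in v..u0, (x - uL)⁻¹ := by
        rw [← intervalIntegral.integral_const_mul]
        congr 1; ext x; rw [mul_inv]
      have h2 : (∫ x in v..u0, (x - uL)⁻¹) = ∫ x in v - uL..u0 - uL, x⁻¹ :=
        intervalIntegral.integral_comp_sub_right (fun x => x⁻¹) uL
      have h3 : (∫ x in v - uL..u0 - uL, x⁻¹) = Real.log ((u0 - uL) / (v - uL)) := by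
        apply integral_inv
        intro hmem
        rw [Set.uIcc_of_le (by linarith : v - uL ≤ u0 - uL)] at hmem
        have := hmem.1
        linarith [sub_pos.2 hv1]
      rw [h1, h2, h3, Real.log_div (by linarith) (by linarith [sub_pos.2 hv1])]
    -- now estimate
    have hlog : Real.log (v - uL) ≤ Real.log (u0 - uL) + M' * (z - 1) := by
      have hve : v - uL = e := by simp [hvdef]
      rw [hve]
      calc Real.log e ≤ Real.log (Real.exp (Real.log (u0 - uL) + M' * (z - 1))) :=
            Real.log_le_log he0 (min_le_right _ _)
        _ = _ := Real.log_exp _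
    have key : z - 1 ≥ M'⁻¹ * (Real.log (v - uL) - Real.log (u0 - uL)) := by
      rw [ge_iff_le, inv_mul_le_iff₀ hM'pos]
      linarith [hlog]
    have : F v ≤ z - 1 := by
      rw [hsymm]
      have := hmono
      rw [hcomp] at this
      nlinarith [this, key, hM'pos]
    linarith
  -- F is unbounded above near uR
  have hup : ∀ z : ℝ, ∃ v ∈ S, z < F v := by
    intro z
    set e : ℝ := min ((uR - u0) / 2) (Real.exp (Real.log (uR - u0) - M' * (z + 1))) with hedef
    have hd0 : 0 < uR - u0 := sub_pos.2 hu0.2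
    have he0 : 0 < e := lt_min (by linarith) (Real.exp_pos _)
    set v : ℝ := uR - e with hvdef
    have hv2 : v < uR := by simp only [hvdef]; linarith
    have hv1 : u0 < v := by
      have : e ≤ (uR - u0) / 2 := min_le_left _ _
      simp only [hvdef]; linarith
    have hvS : v ∈ S := ⟨hu0.1.trans hv1, hv2⟩
    refine ⟨v, hvS, ?_⟩
    have hcont2 : ContinuousOn (fun x : ℝ => (M' * (uR - x))⁻¹) (Set.Icc u0 v) := by
      apply ContinuousOn.inv₀
      · fun_prop
      · intro x hx
        have : 0 < uR - x := by have := hx.2; linarith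
        positivity
    have hint2 : IntervalIntegrable (fun x : ℝ => (M' * (uR - x))⁻¹)
        MeasureTheory.volume u0 v := by
      apply ContinuousOn.intervalIntegrable
      rwa [Set.uIcc_of_le hv1.le]
    have hmono : (∫ x in u0..v, (M' * (uR - x))⁻¹) ≤ ∫ x in u0..v, g x := by
      apply intervalIntegral.integral_mono_on hv1.le hint2 (hint hu0 hvS)
      intro x hx
      exact hgeR x ⟨lt_of_lt_of_le hu0.1 hx.1, lt_of_le_of_lt hx.2 hv2⟩
    have hcomp : (∫ x in u0..v, (M' * (uR - x))⁻¹)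
        = M'⁻¹ * (Real.log (uR - u0) - Real.log (uR - v)) := by
      have h1 : (∫ x in u0..v, (M' * (uR - x))⁻¹)
          = M'⁻¹ * ∫ x in u0..v, (uR - x)⁻¹ := by
        rw [← intervalIntegral.integral_const_mul]
        congr 1; ext x; rw [mul_inv]
      have h2 : (∫ x in u0..v, (uR - x)⁻¹) = ∫ x in uR - v..uR - u0, x⁻¹ :=
        intervalIntegral.integral_comp_sub_left (fun x => x⁻¹) uR
      have h3 : (∫ x in uR - v..uR - u0, x⁻¹) = Real.log ((uR - u0) / (uR - v)) := by
        apply integral_inv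
        intro hmem
        rw [Set.uIcc_of_le (by linarith : uR - v ≤ uR - u0)] at hmem
        have := hmem.1
        linarith [sub_pos.2 hv2]
      rw [h1, h2, h3, Real.log_div (by linarith) (by linarith [sub_pos.2 hv2])]
    have hlog : Real.log (uR - v) ≤ Real.log (uR - u0) - M' * (z + 1) := by
      have hve : uR - v = e := by simp [hvdef]
      rw [hve]
      calc Real.log e ≤ Real.log (Real.exp (Real.log (uR - u0) - M' * (z + 1))) :=
            Real.log_le_log he0 (min_le_right _ _)
        _ = _ := Real.log_exp _
    have key : z + 1 ≤ M'⁻¹ * (Real.log (uR - u0) - Real.log (uR - v)) := by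
      have h := mul_le_mul_of_nonneg_left
        (by linarith [hlog] : M' * (z + 1) ≤ Real.log (uR - u0) - Real.log (uR - v))
        (inv_nonneg.2 hM'pos.le)
      rwa [inv_mul_cancel_left₀ hM'pos.ne'] at h
    have hFvS : F v = F u0 + ∫ x in u0..v, g x := hFadd hu0 hvS
    have : z + 1 ≤ F v := by
      rw [hFvS, hF0, zero_add]
      calc z + 1 ≤ M'⁻¹ * (Real.log (uR - u0) - Real.log (uR - v)) := key
        _ = ∫ x in u0..v, (M' * (uR - x))⁻¹ := hcomp.symm
        _ ≤ _ := hmono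
    linarith
  -- continuity of F on S (from differentiability)
  have hFcont : ContinuousOn F S := fun v hv => ((hFd v hv).continuousAt).continuousWithinAt
  -- surjectivity onto ℝ
  have hsurj : ∀ ζ : ℝ, ∃ v ∈ S, F v = ζ := by
    intro ζ
    obtain ⟨v1, hv1S, hv1⟩ := hdown ζ
    obtain ⟨v2, hv2S, hv2⟩ := hup ζ
    have hv12 : v1 < v2 := by
      by_contra h
      push_neg at h
      rcases eq_or_lt_of_le h with h' | h'
      · rw [h'] at hv2; linarith
      · have := hFlt hv2S hv1S h'; linarith
    have hsubset : Set.Icc v1 v2 ⊆ S := hIccsub hv1S hv2S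
    have := intermediate_value_Icc hv12.le (hFcont.mono hsubset)
    obtain ⟨v, hvmem, hFv⟩ := this ⟨hv1.le, hv2.le⟩
    exact ⟨v, hsubset hvmem, hFv⟩
  -- define u by inverting F
  choose uf hufS hufF using hsurj
  -- uniqueness / monotonicity facts
  have hlt1 : ∀ (ζ : ℝ) (v : ℝ), v ∈ S → ζ < F v → uf ζ < v := by
    intro ζ v hv h
    by_contra hc
    push_neg at hc
    rcases eq_or_lt_of_le hc with h' | h'
    · rw [h', hufF] at h; exact lt_irrefl _ h
    · have := hFlt hv (hufS ζ) h'
      rw [hufF] at this; linarith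
  have hlt2 : ∀ (ζ : ℝ) (v : ℝ), v ∈ S → F v < ζ → v < uf ζ := by
    intro ζ v hv h
    by_contra hc
    push_neg at hc
    rcases eq_or_lt_of_le hc with h' | h'
    · rw [← h', hufF] at h; exact lt_irrefl _ h
    · have := hFlt (hufS ζ) hv h'
      rw [hufF] at this; linarith
  -- continuity of uf
  have hufcont : ∀ ζ : ℝ, ContinuousAt (uf) ζ := by
    intro ζ
    rw [ContinuousAt]
    apply tendsto_order.2
    constructor
    · intro a ha
      set c : ℝ := max a ((uL + uf ζ) / 2) with hcdef
      have hc1 : uL < c := lt_of_lt_of_le (by linarith [(hufS ζ).1]) (le_max_right _ _)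
      have hc2 : c < uf ζ := max_lt ha (by linarith [(hufS ζ).1])
      have hcS : c ∈ S := ⟨hc1, hc2.trans (hufS ζ).2⟩
      have hFc : F c < ζ := by
        have := hFlt hcS (hufS ζ) hc2
        rwa [hufF] at this
      filter_upwards [Ioi_mem_nhds hFc] with y hy
      exact lt_of_le_of_lt (le_max_left _ _ : a ≤ c) (hlt2 y c hcS hy)
    · intro b hb
      set c : ℝ := min b ((uf ζ + uR) / 2) with hcdef
      have hc1 : uf ζ < c := lt_min hb (by linarith [(hufS ζ).2])
      have hc2 : c < uR := lt_of_le_of_lt (min_le_right _ _) (by linarith [(hufS ζ).2])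
      have hcS : c ∈ S := ⟨(hufS ζ).1.trans hc1, hc2⟩
      have hFc : ζ < F c := by
        have := hFlt (hufS ζ) hcS hc1
        rwa [hufF] at this
      filter_upwards [Iio_mem_nhds hFc] with y hy
      exact lt_of_lt_of_le (hlt1 y c hcS hy) (min_le_left _ _)
  refine ⟨uf, ?_, ?_, hufS, ?_, ?_⟩
  · -- uf 0 = u0
    have h1 : F (uf 0) = 0 := hufF 0
    by_contra hne
    rcases lt_or_gt_of_ne hne with h | h
    · have := hFlt (hufS 0) hu0 h
      rw [h1, hF0] at this; exact lt_irrefl _ this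
    · have := hFlt hu0 (hufS 0) h
      rw [h1, hF0] at this; exact lt_irrefl _ this
  · -- derivative
    intro ζ
    have ha : uf ζ ∈ S := hufS ζ
    have hd : HasDerivAt F (g (uf ζ)) (uf ζ) := hFd _ ha
    have hne : g (uf ζ) ≠ 0 := (hgpos _ ha).ne'
    have hev : ∀ᶠ y in nhds ζ, F (uf y) = y := Eventually.of_forall hufF
    have := hd.of_local_left_inverse (hufcont ζ) hne hev
    have hinv : (g (uf ζ))⁻¹ = Φ (uf ζ) := inv_inv _
    rwa [hinv] at this
  · -- limit at -∞
    apply tendsto_order.2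
    constructor
    · intro a ha
      exact Eventually.of_forall fun ζ => ha.trans (hufS ζ).1
    · intro b hb
      set c : ℝ := min ((uL + b) / 2) ((uL + uR) / 2) with hcdef
      have hc1 : uL < c := lt_min (by linarith) (by linarith)
      have hc2 : c < uR := lt_of_le_of_lt (min_le_right _ _) (by linarith)
      have hc3 : c < b := lt_of_le_of_lt (min_le_left _ _) (by linarith)
      have hcS : c ∈ S := ⟨hc1, hc2⟩
      filter_upwards [eventually_lt_atBot (F c)] with ζ hζ
      exact (hlt1 ζ c hcS hζ).trans hc3
  · -- limit at +∞
    apply tendsto_order.2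
    constructor
    · intro a ha
      set c : ℝ := max ((a + uR) / 2) ((uL + uR) / 2) with hcdef
      have hc2 : c < uR := max_lt (by linarith) (by linarith)
      have hc1 : uL < c := lt_of_lt_of_le (by linarith) (le_max_right _ _)
      have hc3 : a < c := lt_of_lt_of_le (by linarith) (le_max_left _ _)
      have hcS : c ∈ S := ⟨hc1, hc2⟩
      filter_upwards [eventually_gt_atTop (F c)] with ζ hζ
      exact hc3.trans (hlt2 ζ c hcS hζ)
    · intro b hb
      exact Eventually.of_forall fun ζ => (hufS ζ).2.trans hb
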